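/- The profile tree T of an n-state NBW A on an infinite word w is a binary tree of width at most n: every class of T other than the level-0 class has exactly one parent, every class has at most two children, all classes descend from the single level-0 class, and every level of T contains at most n classes. -/

import Mathlib

/-!
Profile trees for Büchi determinization (Fisman–Kupferman–Vardi–Wilke style profiles).
Common definitions: nondeterministic Büchi word automata (NBW), the run DAG `G`,
profiles of nodes, and the pruned run DAG `G'`.
-/

/-- A nondeterministic Büchi word automaton `A = (Alph, Q, Qin, ρ, F)` with `Qin ∩ F = ∅`. -/
structure NBW (Alph Q : Type*) where
  Qin : Set Q
  ρ : Q → Alph → Set Q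
  F : Set Q
  disj : Qin ∩ F = ∅

variable {Alph Q : Type*} (A : NBW Alph Q) (w : ℕ → Alph)

/-- Lexicographic order `L₁ ≤ L₂` on profiles (lists over ℕ). -/
def lexLE (L₁ L₂ : List ℕ) : Prop :=
  List.Lex (· < ·) L₁ L₂ ∨ L₁ = L₂

/-- Strict lexicographic order `L₁ < L₂` on profiles. -/
def lexLT (L₁ L₂ : List ℕ) : Prop :=
  List.Lex (· < ·) L₁ L₂

open Classical in
/-- The profiles of all finite initial runs of `A` (on `w`) to the node `v = (q, i)`:
for each run `p₀,…,p_i` with `p₀ ∈ Qin`, `p_{j+1} ∈ ρ(p_j, w_j)` and `p_i = q`, the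
sequence of `F`-visitation labels `f(p₀,0) ⋯ f(p_i,i)` (where `f` is 1 on `F`-nodes, else 0). -/
def runProfiles (v : Q × ℕ) : Set (List ℕ) :=
  { L | ∃ p : ℕ → Q, p 0 ∈ A.Qin ∧ (∀ j < v.2, p (j + 1) ∈ A.ρ (p j) (w j)) ∧
        p v.2 = v.1 ∧ L = (List.range (v.2 + 1)).map (fun j => if p j ∈ A.F then 1 else 0) }

/-- `v` is a node of the run DAG `G = (V, E)` (equivalently of the pruned DAG `G'`):
there is a finite run of `A` to `v.1` on `w₀ ⋯ w_{v.2 - 1}`. -/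
def memV (v : Q × ℕ) : Prop := (runProfiles A w v).Nonempty

/-- `L` is the lexicographically maximal profile among all initial paths to `v`. -/
def IsMaxProfile (v : Q × ℕ) (L : List ℕ) : Prop :=
  L ∈ runProfiles A w v ∧ ∀ L' ∈ runProfiles A w v, lexLE L' L

open Classical in
/-- The profile `h_v` of a node `v`: the lexicographically maximal profile of an
initial path to `v` (junk value `[]` if `v` is not a node of the DAG). -/
noncomputable def profile (v : Q × ℕ) : List ℕ :=
  if h : ∃ L, IsMaxProfile A w v L then h.choose else []

/-- The edge relation `E` of the run DAG `G`: `E((q,i), (q',i+1))` iff `(q,i) ∈ V`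
and `q' ∈ ρ(q, w_i)`. -/
def edgeG (u v : Q × ℕ) : Prop :=
  memV A w u ∧ v.2 = u.2 + 1 ∧ v.1 ∈ A.ρ u.1 (w u.2)

/-- The edge relation `E'` of the pruned run DAG `G'`: `(u,v) ∈ E` and every
`E`-parent `u'` of `v` satisfies `h_{u'} ≤ h_u`. -/
def edgeG' (u v : Q × ℕ) : Prop :=
  edgeG A w u v ∧ ∀ u', edgeG A w u' v → lexLE (profile A w u') (profile A w u)

/-- The equivalence class (under equality of profiles, levelwise) of a node `u` of `G'`. -/
def classOf (u : Q × ℕ) : Set (Q × ℕ) :=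
  { v | memV A w v ∧ v.2 = u.2 ∧ profile A w v = profile A w u }

/-- `C` is a class (node) of the profile tree `T` on level `i`. -/
def ClassAt (C : Set (Q × ℕ)) (i : ℕ) : Prop :=
  ∃ u, memV A w u ∧ u.2 = i ∧ C = classOf A w u

/-- The child relation of the profile tree `T`: `[v]` is a child of `[u]`
whenever `(u, v) ∈ E'`. -/
def childC (C D : Set (Q × ℕ)) : Prop :=
  ∃ u v, edgeG' A w u v ∧ memV A w v ∧ C = classOf A w u ∧ D = classOf A w v

/-- `D` is a descendant of `C` in `T`: there is a (possibly empty) path from `C` to `D`. -/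
def DescC : Set (Q × ℕ) → Set (Q × ℕ) → Prop := Relation.ReflTransGen (childC A w)

/-- `C` is an `F`-class: all its members are `F`-nodes. -/
def IsFClass (C : Set (Q × ℕ)) : Prop := ∀ v ∈ C, v.1 ∈ A.F

/-- `h_C ≤ h_D` for classes `C`, `D` (members of a class all share one profile). -/
def profLE (C D : Set (Q × ℕ)) : Prop :=
  ∀ u ∈ C, ∀ v ∈ D, lexLE (profile A w u) (profile A w v)

/-- `h_C < h_D` for classes `C`, `D`. -/
def profLT (C D : Set (Q × ℕ)) : Prop :=
  ∀ u ∈ C, ∀ v ∈ D, lexLT (profile A w u) (profile A w v)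

/-! ### Auxiliary lemmas -/

lemma lexLE_iff (L₁ L₂ : List ℕ) : lexLE L₁ L₂ ↔ L₁ ≤ L₂ := by
  rw [le_iff_lt_or_eq]; exact Iff.rfl

open Classical in
/-- The `F`-visitation value of a node. -/
noncomputable def fval (v : Q × ℕ) : ℕ := if v.1 ∈ A.F then 1 else 0

lemma length_of_mem_runProfiles {v : Q × ℕ} {L : List ℕ} (h : L ∈ runProfiles A w v) :
    L.length = v.2 + 1 := by
  obtain ⟨p, -, -, -, rfl⟩ := h
  simp

lemma runProfiles_finite (v : Q × ℕ) : (runProfiles A w v).Finite := by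
  classical
  apply Set.Finite.subset ((List.finite_length_eq (Fin 2) (v.2 + 1)).image (List.map Fin.val))
  rintro L ⟨p, -, -, -, rfl⟩
  refine ⟨(List.range (v.2 + 1)).map (fun j => if p j ∈ A.F then (1 : Fin 2) else 0),
    by simp, ?_⟩
  rw [List.map_map]
  apply List.map_congr_left
  intro j _
  by_cases h : p j ∈ A.F <;> simp [h, Function.comp]

lemma exists_isMaxProfile {v : Q × ℕ} (h : memV A w v) : ∃ L, IsMaxProfile A w v L := by
  obtain ⟨L, hL, hmax⟩ := (runProfiles_finite A w v).exists_maximalFor id _ h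
  refine ⟨L, hL, fun L' hL' => (lexLE_iff L' L).2 ?_⟩
  rcases le_total L' L with h' | h'
  · exact h'
  · exact hmax hL' h'

lemma profile_isMax {v : Q × ℕ} (h : memV A w v) : IsMaxProfile A w v (profile A w v) := by
  rw [profile, dif_pos (exists_isMaxProfile A w h)]
  exact (exists_isMaxProfile A w h).choose_spec

lemma profile_mem {v : Q × ℕ} (h : memV A w v) : profile A w v ∈ runProfiles A w v :=
  (profile_isMax A w h).1

lemma profile_max {v : Q × ℕ} (h : memV A w v) {L : List ℕ} (hL : L ∈ runProfiles A w v) :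
    L ≤ profile A w v := (lexLE_iff _ _).1 ((profile_isMax A w h).2 L hL)

lemma profile_length {v : Q × ℕ} (h : memV A w v) : (profile A w v).length = v.2 + 1 :=
  length_of_mem_runProfiles A w (profile_mem A w h)

lemma append_mem_runProfiles {u v : Q × ℕ} (huv : edgeG A w u v) {L : List ℕ}
    (hL : L ∈ runProfiles A w u) : L ++ [fval A v] ∈ runProfiles A w v := by
  classical
  obtain ⟨hu, hv2, hρ⟩ := huv
  obtain ⟨p, hp0, hpstep, hpu, rfl⟩ := hL
  have hnle : ¬ (u.2 + 1 ≤ u.2) := by omega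
  refine ⟨fun j => if j ≤ u.2 then p j else v.1, by simpa using hp0, ?_, ?_, ?_⟩
  · intro j hj
    rw [hv2] at hj
    have hj' : j ≤ u.2 := Nat.lt_succ_iff.mp hj
    rcases lt_or_eq_of_le hj' with h | rfl
    · simp only [if_pos hj', if_pos (Nat.succ_le_of_lt h)]
      exact hpstep j h
    · simp only [if_pos le_rfl, if_neg hnle]
      rw [hpu]; exact hρ
  · simp only [hv2, if_neg hnle]
  · symm
    rw [hv2, List.range_succ, List.map_append]
    congr 1
    · apply List.map_congr_left
      intro j hj
      rw [List.mem_range] at hj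
      have hj' : (if j ≤ u.2 then p j else v.1) = p j := if_pos (Nat.lt_succ_iff.mp hj)
      beta_reduce
      exact if_congr (iff_of_eq (congrArg (· ∈ A.F) hj')) rfl rfl
    · simp only [List.map_cons, List.map_nil]
      have h1 : (if u.2 + 1 ≤ u.2 then p (u.2 + 1) else v.1) = v.1 := if_neg hnle
      congr 1
      exact if_congr (iff_of_eq (congrArg (· ∈ A.F) h1)) rfl rfl

lemma runProfiles_succ {v : Q × ℕ} {i : ℕ} (hv2 : v.2 = i + 1) {L : List ℕ}
    (hL : L ∈ runProfiles A w v) :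
    ∃ u M, edgeG A w u v ∧ M ∈ runProfiles A w u ∧ L = M ++ [fval A v] := by
  classical
  obtain ⟨p, hp0, hpstep, hpv, rfl⟩ := hL
  have hpv' : p (i + 1) = v.1 := by rw [← hv2]; exact hpv
  have hmem : ((List.range (i + 1)).map (fun j => if p j ∈ A.F then 1 else 0)) ∈
      runProfiles A w (p i, i) :=
    ⟨p, hp0, fun j hj => hpstep j (by simp at hj; omega), rfl, rfl⟩
  refine ⟨(p i, i), _, ⟨⟨_, hmem⟩, by simp [hv2], ?_⟩, hmem, ?_⟩
  · show v.1 ∈ A.ρ (p i) (w i)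
    rw [← hpv']
    exact hpstep i (by omega)
  · rw [hv2, List.range_succ, List.map_append]
    congr 1
    simp only [List.map_cons, List.map_nil, hpv']
    rfl

lemma lex_append_lt {L L' : List ℕ} (h : List.Lex (· < ·) L L') (a b : ℕ) :
    L.length = L'.length → List.Lex (· < ·) (L ++ [a]) (L' ++ [b]) := by
  induction h with
  | nil => intro hlen; simp at hlen
  | cons h ih => intro hlen; exact List.Lex.cons (ih (by simpa using hlen))
  | rel h => intro _; exact List.Lex.rel h

lemma lex_append_le {L L' : List ℕ} (hlen : L.length = L'.length) (h : L ≤ L') (a : ℕ) :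
    L ++ [a] ≤ L' ++ [a] := by
  rcases lt_or_eq_of_le h with h' | rfl
  · exact le_of_lt (lex_append_lt h' a a hlen : List.Lex (· < ·) (L ++ [a]) (L' ++ [a]))
  · exact le_refl _

lemma profile_edgeG' {u v : Q × ℕ} (h : edgeG' A w u v) (hv : memV A w v) :
    profile A w v = profile A w u ++ [fval A v] := by
  have hu : memV A w u := h.1.1
  have hv2 : v.2 = u.2 + 1 := h.1.2.1
  apply le_antisymm
  · obtain ⟨u', M, hu'v, hM, hdec⟩ := runProfiles_succ A w hv2 (profile_mem A w hv)
    rw [hdec]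
    have hu' : memV A w u' := hu'v.1
    have h1 : M ≤ profile A w u' := profile_max A w hu' hM
    have h2 : profile A w u' ≤ profile A w u := (lexLE_iff _ _).1 (h.2 u' hu'v)
    have hlen : M.length = (profile A w u).length := by
      rw [length_of_mem_runProfiles A w hM, profile_length A w hu]
      have h3 : v.2 = u'.2 + 1 := hu'v.2.1
      omega
    exact lex_append_le hlen (h1.trans h2) _
  · exact profile_max A w hv (append_mem_runProfiles A w h.1 (profile_mem A w hu))

lemma exists_edgeG'_parent [Fintype Q] {v : Q × ℕ} (hv : memV A w v) {i : ℕ} (hv2 : v.2 = i + 1) :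
    ∃ u, edgeG' A w u v := by
  have hfin : {u | edgeG A w u v}.Finite := by
    apply Set.Finite.subset (Set.finite_range (fun q : Q => ((q, i) : Q × ℕ)))
    rintro ⟨q, j⟩ ⟨-, hu2, -⟩
    refine ⟨q, ?_⟩
    obtain rfl : j = i := by omega
    rfl
  have hne : {u | edgeG A w u v}.Nonempty := by
    obtain ⟨u, M, huv, -, -⟩ := runProfiles_succ A w hv2 (profile_mem A w hv)
    exact ⟨u, huv⟩
  obtain ⟨u, hu, hmax⟩ := hfin.exists_maximalFor (profile A w) _ hne
  refine ⟨u, hu, fun u' hu' => (lexLE_iff _ _).2 ?_⟩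
  rcases le_total (profile A w u') (profile A w u) with h | h
  · exact h
  · exact hmax hu' h

lemma mem_classOf_self {u : Q × ℕ} (hu : memV A w u) : u ∈ classOf A w u := ⟨hu, rfl, rfl⟩

lemma classOf_eq {u u' : Q × ℕ} (h2 : u.2 = u'.2) (hp : profile A w u = profile A w u') :
    classOf A w u = classOf A w u' := by
  ext x; simp only [classOf, Set.mem_setOf_eq, h2, hp]

lemma runProfiles_zero {x : Q × ℕ} (h0 : x.2 = 0) {L : List ℕ} (hL : L ∈ runProfiles A w x) :
    L = [0] := by
  obtain ⟨p, hp0, -, -, rfl⟩ := hL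
  have hnF : p 0 ∉ A.F := by
    intro hF
    have hd := A.disj
    rw [Set.eq_empty_iff_forall_notMem] at hd
    exact hd (p 0) ⟨hp0, hF⟩
  rw [h0]
  simp [List.range_succ, hnF]

lemma profile_zero {x : Q × ℕ} (hx : memV A w x) (h0 : x.2 = 0) : profile A w x = [0] :=
  runProfiles_zero A w h0 (profile_mem A w hx)

lemma classOf_child_eq {u v u' v' : Q × ℕ} (h : edgeG' A w u v) (h' : edgeG' A w u' v')
    (hv : memV A w v) (hv' : memV A w v') (hu2 : u.2 = u'.2)
    (hp : profile A w u = profile A w u') (hf : fval A v = fval A v') :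
    classOf A w v = classOf A w v' :=
  classOf_eq A w (by rw [h.1.2.1, h'.1.2.1, hu2])
    (by rw [profile_edgeG' A w h hv, profile_edgeG' A w h' hv', hp, hf])

/-- Theorem: the profile tree is a binary tree of width at most `n`.
Every class on a level `i+1` has exactly one parent, every class has at most two
children, all classes descend from the single level-0 class, and every level
contains at most `n = |Q|` classes. -/
theorem profile_tree_binary_bounded_width [Fintype Alph] [Fintype Q]
    (A : NBW Alph Q) (w : ℕ → Alph) (n : ℕ) (hn : Fintype.card Q = n) :
    (∀ D i, ClassAt A w D (i + 1) → ∃! C, childC A w C D) ∧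
    (∀ C D₁ D₂ D₃, childC A w C D₁ → childC A w C D₂ → childC A w C D₃ →
      D₁ = D₂ ∨ D₁ = D₃ ∨ D₂ = D₃) ∧
    (∀ R, ClassAt A w R 0 → ∀ C i, ClassAt A w C i → DescC A w R C) ∧
    (∀ i, { C | ClassAt A w C i }.Finite ∧ { C | ClassAt A w C i }.ncard ≤ n) := by
  refine ⟨?_, ?_, ?_, ?_⟩
  · -- unique parent
    rintro D i ⟨v, hv, hv2, rfl⟩
    obtain ⟨u, hu⟩ := exists_edgeG'_parent A w hv hv2
    refine ⟨classOf A w u, ⟨u, v, hu, hv, rfl, rfl⟩, ?_⟩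
    rintro C' ⟨u', v', hu', hv', rfl, hD⟩
    have hvv' : v' ∈ classOf A w v := by rw [hD]; exact mem_classOf_self A w hv'
    have e1 : profile A w v = profile A w u ++ [fval A v] := profile_edgeG' A w hu hv
    have e2 : profile A w v' = profile A w u' ++ [fval A v'] := profile_edgeG' A w hu' hv'
    have heq : profile A w u' ++ [fval A v'] = profile A w u ++ [fval A v] := by
      rw [← e1, ← e2, hvv'.2.2]
    have hl1 : v.2 = u.2 + 1 := hu.1.2.1
    have hl2 : v'.2 = u'.2 + 1 := hu'.1.2.1
    have hl3 : v'.2 = v.2 := hvv'.2.1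
    have hlen : (profile A w u').length = (profile A w u).length := by
      rw [profile_length A w hu'.1.1, profile_length A w hu.1.1]; omega
    obtain ⟨hpu, -⟩ := List.append_inj heq hlen
    exact classOf_eq A w (by omega) hpu
  · -- at most two children
    rintro C D₁ D₂ D₃ ⟨u₁, v₁, h₁, hv₁, rfl, rfl⟩ ⟨u₂, v₂, h₂, hv₂, hC₂, rfl⟩
      ⟨u₃, v₃, h₃, hv₃, hC₃, rfl⟩
    have m₂ : u₂ ∈ classOf A w u₁ := by rw [hC₂]; exact mem_classOf_self A w h₂.1.1
    have m₃ : u₃ ∈ classOf A w u₁ := by rw [hC₃]; exact mem_classOf_self A w h₃.1.1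
    have k12 : fval A v₁ = fval A v₂ → classOf A w v₁ = classOf A w v₂ := fun hf =>
      classOf_child_eq A w h₁ h₂ hv₁ hv₂ m₂.2.1.symm m₂.2.2.symm hf
    have k13 : fval A v₁ = fval A v₃ → classOf A w v₁ = classOf A w v₃ := fun hf =>
      classOf_child_eq A w h₁ h₃ hv₁ hv₃ m₃.2.1.symm m₃.2.2.symm hf
    have k23 : fval A v₂ = fval A v₃ → classOf A w v₂ = classOf A w v₃ := fun hf =>
      classOf_child_eq A w h₂ h₃ hv₂ hv₃ (by rw [m₂.2.1, m₃.2.1]) (by rw [m₂.2.2, m₃.2.2]) hf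
    have hbv : ∀ v : Q × ℕ, fval A v = 0 ∨ fval A v = 1 := fun v => by
      unfold fval; split <;> simp
    have htri : fval A v₁ = fval A v₂ ∨ fval A v₁ = fval A v₃ ∨ fval A v₂ = fval A v₃ := by
      rcases hbv v₁ with h1 | h1 <;> rcases hbv v₂ with h2 | h2 <;>
        rcases hbv v₃ with h3 | h3 <;> omega
    rcases htri with h | h | h
    · exact Or.inl (k12 h)
    · exact Or.inr (Or.inl (k13 h))
    · exact Or.inr (Or.inr (k23 h))
  · -- all classes descend from the root
    rintro R ⟨r, hr, hr2, rfl⟩ C i hC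
    induction i generalizing C with
    | zero =>
      obtain ⟨u, hu, hu2, rfl⟩ := hC
      have hEq : classOf A w u = classOf A w r :=
        classOf_eq A w (by rw [hu2, hr2])
          (by rw [profile_zero A w hu hu2, profile_zero A w hr hr2])
      rw [hEq]
      exact Relation.ReflTransGen.refl
    | succ i ih =>
      obtain ⟨v, hv, hv2, rfl⟩ := hC
      obtain ⟨u, hu⟩ := exists_edgeG'_parent A w hv hv2
      have hui : ClassAt A w (classOf A w u) i :=
        ⟨u, hu.1.1, by have := hu.1.2.1; omega, rfl⟩
      exact Relation.ReflTransGen.tail (ih _ hui) ⟨u, v, hu, hv, rfl, rfl⟩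
  · -- width bound
    intro i
    have hsub : {C | ClassAt A w C i} ⊆ Set.range (fun q : Q => classOf A w (q, i)) := by
      rintro C ⟨u, hu, hu2, rfl⟩
      exact ⟨u.1, by subst hu2; rfl⟩
    have hfin := (Set.finite_range (fun q : Q => classOf A w (q, i))).subset hsub
    refine ⟨hfin, ?_⟩
    calc {C | ClassAt A w C i}.ncard
        ≤ (Set.range fun q : Q => classOf A w (q, i)).ncard :=
          Set.ncard_le_ncard hsub (Set.finite_range _)
      _ ≤ Fintype.card Q := by
          rw [← Set.image_univ]
          refine le_trans (Set.ncard_image_le Set.finite_univ) ?_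
          rw [Set.ncard_univ, Nat.card_eq_fintype_card]
      _ = n := hn
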